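/- Let τ* be drawn uniformly among assignments {1,…,n} → {1,…,d} with type proportions π (all entries of π bounded away from 0 and 1), let m = γ n / log n with γ < H(π)/(d−1), and let S_1,…,S_m be i.i.d. random subsets of {1,…,n} where each element is included independently with probability α ∈ (0,1). Then the probability that τ* is the unique assignment consistent with all m observed histograms (h_a(τ*) = (|τ^{−1}(1)∩S_a|,…,|τ^{−1}(d)∩S_a|) for a = 1,…,m) tends to 0 as n → ∞. More precisely, this probability is at most C(π) n^{(d−1)/2} exp((γ(d−1) − H(π)) n) for a constant C(π) > 0. -/

import Mathlib

open Finset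
open scoped Classical

lemma sqrtpi_le_stirling (k : ℕ) (hk : 1 ≤ k) : Real.sqrt Real.pi ≤ Stirling.stirlingSeq k := by
  obtain ⟨j, rfl⟩ := Nat.exists_eq_add_of_le hk
  have ht : Filter.Tendsto (Stirling.stirlingSeq ∘ Nat.succ) Filter.atTop (nhds (Real.sqrt Real.pi)) := by
    have : (Stirling.stirlingSeq ∘ Nat.succ) = fun n => Stirling.stirlingSeq (n+1) := rfl
    rw [this, Filter.tendsto_add_atTop_iff_nat 1]
    exact Stirling.tendsto_stirlingSeq_sqrt_pi
  have := Stirling.stirlingSeq'_antitone.le_of_tendsto ht j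
  simpa [Nat.add_comm] using this

lemma stirling_le (k : ℕ) (hk : 1 ≤ k) : Stirling.stirlingSeq k ≤ Real.exp 1 / Real.sqrt 2 := by
  obtain ⟨j, rfl⟩ := Nat.exists_eq_add_of_le hk
  have := Stirling.stirlingSeq'_antitone (Nat.zero_le j)
  simpa [Nat.add_comm, Stirling.stirlingSeq_one] using this

lemma stirling_lower (k : ℕ) (hk : 1 ≤ k) :
    Real.sqrt Real.pi * (Real.sqrt (2*k) * (k / Real.exp 1)^k) ≤ (k.factorial : ℝ) := by
  have hpos : 0 < Real.sqrt (2*k) * (k / Real.exp 1)^k := by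
    have : (0:ℝ) < k := by exact_mod_cast hk
    positivity
  have h := sqrtpi_le_stirling k hk
  rw [Stirling.stirlingSeq, le_div_iff₀ hpos] at h
  exact h

lemma stirling_upper (k : ℕ) (hk : 1 ≤ k) :
    (k.factorial : ℝ) ≤ Real.exp 1 * (Real.sqrt k * (k / Real.exp 1)^k) := by
  have hpos : 0 < Real.sqrt (2*k) * (k / Real.exp 1)^k := by
    have : (0:ℝ) < k := by exact_mod_cast hk
    positivity
  have h := stirling_le k hk
  rw [Stirling.stirlingSeq, div_le_iff₀ hpos] at h
  calc (k.factorial : ℝ) ≤ Real.exp 1 / Real.sqrt 2 * (Real.sqrt (2*k) * (k / Real.exp 1)^k) := h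
    _ = Real.exp 1 * (Real.sqrt k * (k / Real.exp 1)^k) := by
        rw [show (2*(k:ℝ)) = 2 * k by norm_num, Real.sqrt_mul (by norm_num)]
        have h2 : Real.sqrt 2 ≠ 0 := by positivity
        field_simp

lemma exists_assignment (d n : ℕ) (c : Fin d → ℕ) (hc : ∑ r, c r = n) :
    ∃ τ0 : Fin n → Fin d, ∀ r, (Finset.univ.filter (fun i => τ0 i = r)).card = c r := by
  have hcard : Fintype.card (Σ r : Fin d, Fin (c r)) = Fintype.card (Fin n) := by
    simp [Fintype.card_sigma, hc]
  obtain ⟨e⟩ := Fintype.card_eq.mp hcard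
  refine ⟨fun i => (e.symm i).1, fun r => ?_⟩
  rw [← Fintype.card_subtype]
  have e1 : {i : Fin n // (e.symm i).1 = r} ≃ {p : Σ r' : Fin d, Fin (c r') // p.1 = r} :=
    Equiv.subtypeEquiv e.symm (fun i => Iff.rfl)
  have e2 : {p : Σ r' : Fin d, Fin (c r') // p.1 = r} ≃ Fin (c r) :=
    { toFun := fun p => p.2 ▸ p.1.2
      invFun := fun x => ⟨⟨r, x⟩, rfl⟩
      left_inv := by rintro ⟨⟨r', x⟩, rfl⟩; rfl
      right_inv := fun x => rfl }
  rw [Fintype.card_congr (e1.trans e2), Fintype.card_fin]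

lemma count_lower (d n : ℕ) (c : Fin d → ℕ) (hc : ∑ r, c r = n) :
    (n.factorial : ℕ) ≤ (Finset.univ.filter (fun τ : Fin n → Fin d =>
        ∀ r, (Finset.univ.filter (fun i => τ i = r)).card = c r)).card * ∏ r, (c r).factorial := by
  classical
  obtain ⟨τ0, hτ0⟩ := exists_assignment d n c hc
  set T := Finset.univ.filter (fun τ : Fin n → Fin d =>
        ∀ r, (Finset.univ.filter (fun i => τ i = r)).card = c r) with hT
  set Φ : Equiv.Perm (Fin n) → (Fin n → Fin d) := fun σ => τ0 ∘ ⇑σ with hΦ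
  have hfib : (Finset.univ : Finset (Equiv.Perm (Fin n))).card
      = ∑ τ ∈ T, ((Finset.univ : Finset (Equiv.Perm (Fin n))).filter
          (fun σ => Φ σ = τ)).card := by
    apply Finset.card_eq_sum_card_fiberwise
    intro σ _
    rw [hT, Finset.mem_coe, Finset.mem_filter]
    refine ⟨Finset.mem_univ _, fun r => ?_⟩
    rw [← hτ0 r]
    apply Finset.card_bij (fun i _ => σ i)
    · intro i hi
      simp only [Finset.mem_filter, Finset.mem_univ, true_and, hΦ, Function.comp_apply] at hi ⊢
      exact hi
    · intro i _ j _ h; exact σ.injective h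
    · intro j hj
      simp only [Finset.mem_filter, Finset.mem_univ, true_and, hΦ, Function.comp_apply] at hj ⊢
      exact ⟨σ.symm j, by simp [hj], by simp⟩
  have hbound : ∀ τ ∈ T, ((Finset.univ : Finset (Equiv.Perm (Fin n))).filter
      (fun σ => Φ σ = τ)).card ≤ ∏ r, (c r).factorial := by
    intro τ hτ
    rw [hT, Finset.mem_filter] at hτ
    have hcards : ∀ r, Fintype.card {i : Fin n // τ i = r} = c r := by
      intro r; rw [Fintype.card_subtype]; exact hτ.2 r
    have hcards0 : ∀ r, Fintype.card {i : Fin n // τ0 i = r} = c r := by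
      intro r; rw [Fintype.card_subtype]; exact hτ0 r
    have key : ((Finset.univ : Finset (Equiv.Perm (Fin n))).filter
        (fun σ => Φ σ = τ)).card
        ≤ Fintype.card (∀ r : Fin d, ({i : Fin n // τ i = r} ↪ {i : Fin n // τ0 i = r})) := by
      rw [← Fintype.card_subtype]
      apply Fintype.card_le_of_injective
        (fun σp => fun r => ⟨fun i => ⟨σp.1 i.1, (congrFun σp.2 i.1).trans i.2⟩,
          fun i j h => Subtype.ext (σp.1.injective (congrArg Subtype.val h))⟩)
      intro a b h
      apply Subtype.ext
      apply Equiv.ext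
      intro i
      have h1 := congrFun h (τ i)
      have h2 := congrArg (fun em => ((Function.Embedding.toFun em) ⟨i, rfl⟩ :
        {j : Fin n // τ0 j = τ i}).1) h1
      exact h2
    refine le_trans key ?_
    rw [Fintype.card_pi]
    apply Finset.prod_le_prod
    · intro r _; exact Nat.zero_le _
    · intro r _
      rw [Fintype.card_embedding_eq, hcards, hcards0, Nat.descFactorial_self]
  calc (n.factorial : ℕ) = (Finset.univ : Finset (Equiv.Perm (Fin n))).card := by
        rw [Finset.card_univ, Fintype.card_perm, Fintype.card_fin]
    _ = ∑ τ ∈ T, _ := hfib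
    _ ≤ ∑ τ ∈ T, ∏ r, (c r).factorial := Finset.sum_le_sum hbound
    _ = T.card * ∏ r, (c r).factorial := by rw [Finset.sum_const, smul_eq_mul]

lemma weight_sum_one (n : ℕ) (α : ℝ) :
    ∑ S : Finset (Fin n), α ^ S.card * (1 - α) ^ (n - S.card) = 1 := by
  have h := Finset.prod_add (fun _ : Fin n => α) (fun _ : Fin n => (1 - α)) Finset.univ
  simp only [Finset.prod_const, Finset.card_univ, Fintype.card_fin] at h
  rw [show α + (1 - α) = 1 by ring, one_pow] at h
  rw [eq_comm]
  conv_lhs => rw [h]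
  rw [← Finset.powerset_univ]
  apply Finset.sum_congr rfl
  intro S _
  congr 1
  rw [← Finset.compl_eq_univ_sdiff, Finset.card_compl, Fintype.card_fin]

lemma weight_sum_one_pi (n m : ℕ) (α : ℝ) :
    ∑ Ss : Fin m → Finset (Fin n),
      (∏ a, α ^ (Ss a).card * (1 - α) ^ (n - (Ss a).card)) = 1 := by
  have key := Finset.prod_univ_sum (fun _ : Fin m => (Finset.univ : Finset (Finset (Fin n))))
    (fun _ S => α ^ S.card * (1 - α) ^ (n - S.card))
  rw [← Fintype.piFinset_univ, ← key]
  simp [weight_sum_one n α]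

lemma hist_count (d n m : ℕ) (c : Fin d → ℕ) (hd : 1 ≤ d) (hcn : ∀ r, c r < n)
    (Ss : Fin m → Finset (Fin n)) :
    (((Finset.univ.filter (fun τ : Fin n → Fin d =>
        ∀ r, (Finset.univ.filter (fun i => τ i = r)).card = c r)).filter
      (fun τstar => ∀ τ : Fin n → Fin d,
        (∀ (a : Fin m) (r : Fin d),
          ((Ss a).filter (fun i => τ i = r)).card =
            ((Ss a).filter (fun i => τstar i = r)).card) → τ = τstar))).card
      ≤ n ^ ((d-1)*m) := by
  classical
  have hn : 0 < n := lt_of_le_of_lt (Nat.zero_le _) (hcn ⟨0, hd⟩)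
  set T := Finset.univ.filter (fun τ : Fin n → Fin d =>
        ∀ r, (Finset.univ.filter (fun i => τ i = r)).card = c r) with hT
  set P : (Fin n → Fin d) → Prop := fun τstar => ∀ τ : Fin n → Fin d,
        (∀ (a : Fin m) (r : Fin d),
          ((Ss a).filter (fun i => τ i = r)).card =
            ((Ss a).filter (fun i => τstar i = r)).card) → τ = τstar with hP
  have hcardtarget : Fintype.card (Fin m → {r : Fin d // r ≠ (⟨0, hd⟩ : Fin d)} → Fin n)
      = n ^ ((d-1)*m) := by
    rw [Fintype.card_fun, Fintype.card_fun, Fintype.card_fin, Fintype.card_fin,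
      Fintype.card_subtype_compl, Fintype.card_subtype_eq, Fintype.card_fin, ← pow_mul]
  rw [← hcardtarget, ← Fintype.card_coe (T.filter P)]
  -- the sum over all fibers of the histogram equals |Ss a|
  have hsum : ∀ (τ : Fin n → Fin d) (a : Fin m),
      ∑ r, ((Ss a).filter (fun i => τ i = r)).card = (Ss a).card := by
    intro τ a
    exact (Finset.card_eq_sum_card_fiberwise (fun i _ => Finset.mem_univ (τ i))).symm
  apply Fintype.card_le_of_injective
    (fun τp => fun a r => (⟨((Ss a).filter (fun i => τp.1 i = r.1)).card, by
      obtain ⟨hTm, -⟩ := Finset.mem_filter.mp τp.2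
      obtain ⟨-, hτc⟩ := Finset.mem_filter.mp hTm
      calc ((Ss a).filter (fun i => τp.1 i = r.1)).card
          ≤ (Finset.univ.filter (fun i => τp.1 i = r.1)).card :=
            Finset.card_le_card (Finset.filter_subset_filter _ (Finset.subset_univ _))
        _ = c r.1 := hτc r.1
        _ < n := hcn r.1⟩ : Fin n))
  intro a b h
  apply Subtype.ext
  obtain ⟨-, hPa⟩ := Finset.mem_filter.mp a.2
  obtain ⟨-, hPb⟩ := Finset.mem_filter.mp b.2
  -- histogram equality for all r
  have hall : ∀ (a' : Fin m) (r : Fin d),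
      ((Ss a').filter (fun i => a.1 i = r)).card = ((Ss a').filter (fun i => b.1 i = r)).card := by
    intro a' r
    have hne : ∀ r' : Fin d, r' ≠ ⟨0, hd⟩ →
        ((Ss a').filter (fun i => a.1 i = r')).card
          = ((Ss a').filter (fun i => b.1 i = r')).card := by
      intro r' hr'
      have := congrFun (congrFun h a') ⟨r', hr'⟩
      exact congrArg Fin.val this
    by_cases hr : r = ⟨0, hd⟩
    · subst hr
      have h1 := hsum a.1 a'
      have h2 := hsum b.1 a'
      rw [← Finset.add_sum_erase _ _ (Finset.mem_univ (⟨0, hd⟩ : Fin d))] at h1 h2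
      have h3 : ∑ r' ∈ Finset.univ.erase (⟨0, hd⟩ : Fin d),
            ((Ss a').filter (fun i => a.1 i = r')).card
          = ∑ r' ∈ Finset.univ.erase (⟨0, hd⟩ : Fin d),
            ((Ss a').filter (fun i => b.1 i = r')).card := by
        apply Finset.sum_congr rfl
        intro r' hr'
        exact hne r' (Finset.ne_of_mem_erase hr')
      omega
    · exact hne r hr
  exact hPb a.1 hall

lemma N_lower (d n : ℕ) (hd : 2 ≤ d) (hn : 2 ≤ n) (π : Fin d → ℝ)
    (hπ : ∀ r, π r ∈ Set.Ioo (0:ℝ) 1)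
    (c : Fin d → ℕ) (hc : ∀ r, (c r : ℝ) = π r * n) (hcsum : ∑ r, c r = n) :
    (Real.sqrt Real.pi * Real.sqrt 2) / (Real.exp 1 ^ d * ∏ r, Real.sqrt (π r))
      * Real.exp ((-(∑ r, π r * Real.log (π r))) * n) * ((Real.sqrt n) ^ (d-1))⁻¹
    ≤ ((Finset.univ.filter (fun τ : Fin n → Fin d =>
          ∀ r, (Finset.univ.filter (fun i => τ i = r)).card = c r)).card : ℝ) := by
  have hnpos : (0:ℝ) < n := by
    have : (2:ℝ) ≤ n := by exact_mod_cast hn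
    linarith
  have hc1 : ∀ r, 1 ≤ c r := by
    intro r
    rw [Nat.one_le_iff_ne_zero]
    intro h0
    have := hc r
    rw [h0] at this
    have hp := mul_pos (hπ r).1 hnpos
    simp only [Nat.cast_zero] at this
    linarith
  set N : ℝ := ((Finset.univ.filter (fun τ : Fin n → Fin d =>
          ∀ r, (Finset.univ.filter (fun i => τ i = r)).card = c r)).card : ℝ) with hN
  set e1 : ℝ := Real.exp 1 with he1
  set s : ℝ := Real.sqrt n with hs
  set H : ℝ := -(∑ r, π r * Real.log (π r)) with hH
  have hspos : 0 < s := Real.sqrt_pos.mpr hnpos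
  have he1pos : 0 < e1 := Real.exp_pos 1
  have hAf : Real.sqrt Real.pi * (Real.sqrt 2 * s * ((n:ℝ) / e1)^n) ≤ (n.factorial : ℝ) := by
    have h := stirling_lower n (by omega)
    rw [Real.sqrt_mul (by norm_num) (n:ℝ)] at h
    exact h
  set B : ℝ := ∏ r, (e1 * (Real.sqrt (c r) * ((c r : ℝ) / e1)^(c r))) with hB
  have hfactB : (∏ r, ((c r).factorial : ℝ)) ≤ B := by
    apply Finset.prod_le_prod
    · intro r _; positivity
    · intro r _; exact stirling_upper (c r) (hc1 r)
  have hBpos : 0 < B := by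
    rw [hB]
    apply Finset.prod_pos
    intro r _
    have : (0:ℝ) < c r := by exact_mod_cast hc1 r
    positivity
  -- N * B ≥ n!
  have hNB : Real.sqrt Real.pi * (Real.sqrt 2 * s * ((n:ℝ) / e1)^n) ≤ N * B := by
    refine le_trans hAf (le_trans ?_ (mul_le_mul_of_nonneg_left hfactB (by positivity)))
    have := count_lower d n c hcsum
    have hcast : (n.factorial : ℝ) ≤ N * ∏ r, ((c r).factorial : ℝ) := by
      rw [hN, ← Nat.cast_prod]
      exact_mod_cast this
    exact hcast
  have hexpH : (∏ r, (π r)^(c r) : ℝ) = (Real.exp (H * n))⁻¹ := by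
    have hh : ∀ r : Fin d, (π r)^(c r) = Real.exp ((c r : ℝ) * Real.log (π r)) := by
      intro r
      rw [mul_comm, Real.exp_mul, Real.exp_log (hπ r).1]
      norm_num
    rw [Finset.prod_congr rfl (fun r _ => hh r), ← Real.exp_sum, ← Real.exp_neg]
    congr 1
    rw [hH]
    have hh2 : ∀ r : Fin d, (c r : ℝ) * Real.log (π r) = π r * Real.log (π r) * n := by
      intro r; rw [hc r]; ring
    rw [Finset.sum_congr rfl (fun r _ => hh2 r), ← Finset.sum_mul]
    ring
  have hsqrt : ∏ r, Real.sqrt (c r) = (∏ r, Real.sqrt (π r)) * s^d := by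
    have hh : ∀ r : Fin d, Real.sqrt (c r) = Real.sqrt (π r) * s := by
      intro r; rw [hc r, Real.sqrt_mul (hπ r).1.le, hs]
    rw [Finset.prod_congr rfl (fun r _ => hh r), Finset.prod_mul_distrib, Finset.prod_const,
      Finset.card_univ, Fintype.card_fin]
  have hpow : ∏ r, ((c r : ℝ)/e1)^(c r) = (Real.exp (H * n))⁻¹ * ((n:ℝ)/e1)^n := by
    have hh : ∀ r : Fin d, ((c r : ℝ)/e1)^(c r) = (π r)^(c r) * ((n:ℝ)/e1)^(c r) := by
      intro r; rw [hc r, ← mul_pow]; congr 1; ring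
    rw [Finset.prod_congr rfl (fun r _ => hh r), Finset.prod_mul_distrib, hexpH,
      Finset.prod_pow_eq_pow_sum, hcsum]
  have hBeq : B = e1^d * ((∏ r, Real.sqrt (π r)) * s^d) *
      ((Real.exp (H * n))⁻¹ * ((n:ℝ)/e1)^n) := by
    rw [hB, Finset.prod_mul_distrib, Finset.prod_mul_distrib, Finset.prod_const,
      Finset.card_univ, Fintype.card_fin, hsqrt, hpow]
    ring
  have hsd : s^d = s^(d-1) * s := by
    rw [← pow_succ]
    congr 1
    omega
  have hprodpos : 0 < ∏ r, Real.sqrt (π r) :=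
    Finset.prod_pos fun r _ => Real.sqrt_pos.2 (hπ r).1
  have key : (Real.sqrt Real.pi * Real.sqrt 2) / (e1^d * ∏ r, Real.sqrt (π r))
      * Real.exp (H * n) * ((s^(d-1))⁻¹) * B
      = Real.sqrt Real.pi * (Real.sqrt 2 * s * ((n:ℝ)/e1)^n) := by
    rw [hBeq, hsd]
    have h1 : s^(d-1) ≠ 0 := by positivity
    have h2 : Real.exp (H * n) ≠ 0 := (Real.exp_pos _).ne'
    field_simp
  have final : (Real.sqrt Real.pi * Real.sqrt 2) / (e1^d * ∏ r, Real.sqrt (π r))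
      * Real.exp (H * n) * ((s^(d-1))⁻¹) * B ≤ N * B := by
    rw [key]; exact hNB
  exact le_of_mul_le_mul_right final hBpos

/-- Lower bound (converse) part of the main theorem.  Let `τ*` be uniform among assignments
`{1,…,n} → {1,…,d}` with type counts `c` (proportions `π`, entries in `(0,1)`), let
`m ≤ γ n / log n` with `γ < H(π)/(d−1)`, and let `S_1,…,S_m` be i.i.d. random subsets where
each element is included independently with probability `α`.  The probability that `τ*` is
the unique assignment consistent with all `m` observed histograms is at most
`C(π) n^{(d−1)/2} exp((γ(d−1) − H(π)) n)` (hence tends to `0` as `n → ∞`). -/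
theorem uniqueness_probability_upper_bound (d : ℕ) (hd : 2 ≤ d)
    (π : Fin d → ℝ) (hπ : ∀ r, π r ∈ Set.Ioo (0:ℝ) 1) (hsum : ∑ r, π r = 1)
    (α : ℝ) (hα : α ∈ Set.Ioo (0:ℝ) 1)
    (γ : ℝ) (hγpos : 0 < γ)
    (hγ : γ < (-(∑ r, π r * Real.log (π r))) / ((d : ℝ) - 1)) :
    ∃ C > (0:ℝ), ∀ n : ℕ, 2 ≤ n → ∀ c : Fin d → ℕ, (∀ r, (c r : ℝ) = π r * n) →
      ∀ m : ℕ, (m : ℝ) ≤ γ * n / Real.log n →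
      ((((Finset.univ.filter (fun τ : Fin n → Fin d =>
            ∀ r, (Finset.univ.filter (fun i => τ i = r)).card = c r)).card : ℝ))⁻¹ *
        ∑ τstar ∈ Finset.univ.filter (fun τ : Fin n → Fin d =>
            ∀ r, (Finset.univ.filter (fun i => τ i = r)).card = c r),
          ∑ Ss : Fin m → Finset (Fin n),
            (∏ a, α ^ (Ss a).card * (1 - α) ^ (n - (Ss a).card)) *
              (if ∀ τ : Fin n → Fin d,
                  (∀ (a : Fin m) (r : Fin d),
                    ((Ss a).filter (fun i => τ i = r)).card =
                      ((Ss a).filter (fun i => τstar i = r)).card) → τ = τstar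
                then (1 : ℝ) else 0))
      ≤ C * (n : ℝ) ^ (((d : ℝ) - 1) / 2) *
          Real.exp ((γ * ((d : ℝ) - 1) - (-(∑ r, π r * Real.log (π r)))) * n) := by
  have hprodpos : 0 < ∏ r, Real.sqrt (π r) :=
    Finset.prod_pos fun r _ => Real.sqrt_pos.2 (hπ r).1
  have hDpos : 0 < (Real.sqrt Real.pi * Real.sqrt 2) / (Real.exp 1 ^ d * ∏ r, Real.sqrt (π r)) := by
    have : 0 < Real.sqrt Real.pi := Real.sqrt_pos.2 Real.pi_pos
    positivity
  refine ⟨(Real.exp 1 ^ d * ∏ r, Real.sqrt (π r)) / (Real.sqrt Real.pi * Real.sqrt 2), by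
    have : 0 < Real.sqrt Real.pi := Real.sqrt_pos.2 Real.pi_pos
    positivity, ?_⟩
  intro n hn c hc m hm
  have hnposR : (0:ℝ) < n := by
    have : (2:ℝ) ≤ n := by exact_mod_cast hn
    linarith
  set H : ℝ := -(∑ r, π r * Real.log (π r)) with hH
  have hcsum : ∑ r, c r = n := by
    have : ((∑ r, c r : ℕ) : ℝ) = n := by
      push_cast
      rw [Finset.sum_congr rfl fun r _ => hc r, ← Finset.sum_mul, hsum, one_mul]
    exact_mod_cast this
  have hclt : ∀ r, c r < n := by
    intro r
    have h1 := hc r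
    have h2 : (c r : ℝ) < n := by
      rw [h1]
      nlinarith [(hπ r).2, hnposR]
    exact_mod_cast h2
  set T := Finset.univ.filter (fun τ : Fin n → Fin d =>
      ∀ r, (Finset.univ.filter (fun i => τ i = r)).card = c r) with hT
  have hTpos : 0 < T.card := by
    rcases Nat.eq_zero_or_pos T.card with h0 | h
    · exfalso
      have := count_lower d n c hcsum
      rw [← hT, h0, zero_mul, Nat.le_zero] at this
      exact (Nat.factorial_pos n).ne' this
    · exact h
  have hNposR : (0:ℝ) < (T.card : ℝ) := by exact_mod_cast hTpos
  set K : ℝ := (n:ℝ) ^ ((d-1)*m) with hK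
  have hKnonneg : 0 ≤ K := by positivity
  -- weights are nonnegative
  have hw : ∀ Ss : Fin m → Finset (Fin n),
      0 ≤ ∏ a, α ^ (Ss a).card * (1 - α) ^ (n - (Ss a).card) := by
    intro Ss
    apply Finset.prod_nonneg
    intro a _
    have h1 := hα.1.le
    have h2 : (0:ℝ) ≤ 1 - α := by linarith [hα.2]
    positivity
  -- Step 1: bound the double sum by K
  have hsum_le : (∑ τstar ∈ T,
      ∑ Ss : Fin m → Finset (Fin n),
        (∏ a, α ^ (Ss a).card * (1 - α) ^ (n - (Ss a).card)) *
          (if ∀ τ : Fin n → Fin d,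
              (∀ (a : Fin m) (r : Fin d),
                ((Ss a).filter (fun i => τ i = r)).card =
                  ((Ss a).filter (fun i => τstar i = r)).card) → τ = τstar
            then (1 : ℝ) else 0)) ≤ K := by
    rw [Finset.sum_comm]
    have step : ∀ Ss : Fin m → Finset (Fin n),
        (∑ τstar ∈ T,
          (∏ a, α ^ (Ss a).card * (1 - α) ^ (n - (Ss a).card)) *
            (if ∀ τ : Fin n → Fin d,
                (∀ (a : Fin m) (r : Fin d),
                  ((Ss a).filter (fun i => τ i = r)).card =
                    ((Ss a).filter (fun i => τstar i = r)).card) → τ = τstar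
              then (1 : ℝ) else 0))
        ≤ (∏ a, α ^ (Ss a).card * (1 - α) ^ (n - (Ss a).card)) * K := by
      intro Ss
      rw [← Finset.mul_sum]
      apply mul_le_mul_of_nonneg_left _ (hw Ss)
      rw [Finset.sum_boole]
      have := hist_count d n m c (by omega) hclt Ss
      rw [hK]
      calc (((T.filter (fun τstar => ∀ τ : Fin n → Fin d,
            (∀ (a : Fin m) (r : Fin d),
              ((Ss a).filter (fun i => τ i = r)).card =
                ((Ss a).filter (fun i => τstar i = r)).card) → τ = τstar)).card : ℝ))
          ≤ ((n ^ ((d-1)*m) : ℕ) : ℝ) := by exact_mod_cast this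
        _ = (n:ℝ) ^ ((d-1)*m) := by push_cast; ring
    calc (∑ Ss : Fin m → Finset (Fin n), ∑ τstar ∈ T,
          (∏ a, α ^ (Ss a).card * (1 - α) ^ (n - (Ss a).card)) *
            (if ∀ τ : Fin n → Fin d,
                (∀ (a : Fin m) (r : Fin d),
                  ((Ss a).filter (fun i => τ i = r)).card =
                    ((Ss a).filter (fun i => τstar i = r)).card) → τ = τstar
              then (1 : ℝ) else 0))
        ≤ ∑ Ss : Fin m → Finset (Fin n),
            (∏ a, α ^ (Ss a).card * (1 - α) ^ (n - (Ss a).card)) * K :=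
          Finset.sum_le_sum fun Ss _ => step Ss
      _ = K := by rw [← Finset.sum_mul, weight_sum_one_pi, one_mul]
  -- Step 2: bound K by the exponential
  have hlogpos : 0 < Real.log n := Real.log_pos (by exact_mod_cast hn)
  have hmlog : (m:ℝ) * Real.log n ≤ γ * n := by
    rw [← le_div_iff₀ hlogpos]
    exact hm
  have hKexp : K ≤ Real.exp (γ * ((d:ℝ)-1) * n) := by
    rw [hK]
    conv_lhs => rw [← Real.exp_log hnposR]
    rw [← Real.exp_nat_mul]
    apply Real.exp_le_exp.2
    have hcast : (((d-1)*m : ℕ) : ℝ) = ((d:ℝ)-1) * m := by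
      push_cast [Nat.cast_sub (by omega : 1 ≤ d)]
      ring
    rw [hcast, mul_assoc]
    have hdm1 : (0:ℝ) ≤ (d:ℝ) - 1 := by
      have : (2:ℝ) ≤ d := by exact_mod_cast hd
      linarith
    calc ((d:ℝ)-1) * ((m:ℝ) * Real.log n) ≤ ((d:ℝ)-1) * (γ * n) :=
          mul_le_mul_of_nonneg_left hmlog hdm1
      _ = γ * ((d:ℝ)-1) * n := by ring
  -- Step 3: the lower bound on T.card
  have hNlow := N_lower d n hd hn π hπ c hc hcsum
  rw [← hT, ← hH] at hNlow
  set D : ℝ := (Real.sqrt Real.pi * Real.sqrt 2) / (Real.exp 1 ^ d * ∏ r, Real.sqrt (π r))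
    with hD
  set s : ℝ := Real.sqrt n with hs
  have hspos : 0 < s := Real.sqrt_pos.2 hnposR
  set L : ℝ := D * Real.exp (H * n) * ((s ^ (d-1))⁻¹) with hL
  have hLpos : 0 < L := by
    rw [hL]
    positivity
  -- rpow identity
  have hrpow : (n:ℝ) ^ (((d:ℝ)-1)/2) = s ^ (d-1) := by
    rw [hs, show Real.sqrt (n:ℝ) = (n:ℝ) ^ ((1:ℝ)/2) from Real.sqrt_eq_rpow _,
      ← Real.rpow_natCast ((n:ℝ) ^ ((1:ℝ)/2)) (d-1), ← Real.rpow_mul hnposR.le]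
    congr 1
    push_cast [Nat.cast_sub (by omega : 1 ≤ d)]
    ring
  calc ((T.card : ℝ))⁻¹ * (∑ τstar ∈ T, _) ≤ ((T.card : ℝ))⁻¹ * K :=
        mul_le_mul_of_nonneg_left hsum_le (inv_nonneg.2 hNposR.le)
    _ ≤ L⁻¹ * K := mul_le_mul_of_nonneg_right (inv_anti₀ hLpos hNlow) hKnonneg
    _ ≤ L⁻¹ * Real.exp (γ * ((d:ℝ)-1) * n) :=
        mul_le_mul_of_nonneg_left hKexp (inv_nonneg.2 hLpos.le)
    _ = (Real.exp 1 ^ d * ∏ r, Real.sqrt (π r)) / (Real.sqrt Real.pi * Real.sqrt 2) *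
          (n:ℝ) ^ (((d:ℝ)-1)/2) * Real.exp ((γ * ((d:ℝ)-1) - H) * n) := by
        rw [hrpow, hL, hD]
        rw [mul_inv, mul_inv, inv_inv, inv_div]
        rw [show (γ * ((d:ℝ)-1) - H) * n = γ * ((d:ℝ)-1) * n - H * n by ring,
          Real.exp_sub]
        field_simp
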